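/- Let ε, C > 0 be real numbers with 4ε < C, and let b : ℕ → ℝ be a nonnegative sequence satisfying b 0 ≤ ε and, for all n ≥ 1, b n ≤ C⁻¹ · Σ_{k=0}^{n-1} (b k) · (b (n-1-k)). Then the series Σ_{n} b n is summable. -/

import Mathlib

lemma catalan_le_four_pow (n : ℕ) : catalan n ≤ 4 ^ n := by
  have h1 : catalan n ≤ n.centralBinom := by
    have := succ_mul_catalan_eq_centralBinom n
    nlinarith [catalan n, this]
  have h2 : n.centralBinom ≤ 4 ^ n := by
    unfold Nat.centralBinom
    calc (2 * n).choose n ≤ (2 * n + 1).choose n :=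
          Nat.choose_le_choose n (Nat.le_succ _)
      _ ≤ 4 ^ n := Nat.choose_middle_le_pow n
  omega

theorem summable_of_catalan_recursion (ε C : ℝ) (hε : 0 < ε) (hC : 0 < C)
    (h4 : 4 * ε < C)
    (b : ℕ → ℝ) (hb : ∀ n, 0 ≤ b n) (hb0 : b 0 ≤ ε)
    (hrec : ∀ n, 1 ≤ n → b n ≤ C⁻¹ * ∑ k ∈ Finset.range n, b k * b (n - 1 - k)) :
    Summable b := by
  have key : ∀ n, b n ≤ (catalan n : ℝ) * ε ^ (n + 1) / C ^ n := by
    intro n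
    induction n using Nat.strong_induction_on with
    | _ n ih =>
      match n with
      | 0 => simpa [catalan_zero] using hb0
      | (m + 1) =>
        have h1 := hrec (m + 1) (by omega)
        have h2 : ∑ k ∈ Finset.range (m + 1), b k * b (m + 1 - 1 - k)
            ≤ ∑ k ∈ Finset.range (m + 1),
              ((catalan k * catalan (m - k) : ℕ) : ℝ) * (ε ^ (m + 2) / C ^ m) := by
          apply Finset.sum_le_sum
          intro k hk
          have hk' : k < m + 1 := Finset.mem_range.mp hk
          have e : m + 1 - 1 - k = m - k := by omega
          rw [e]
          have hbk := ih k (by omega)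
          have hbm := ih (m - k) (by omega)
          have step : b k * b (m - k)
              ≤ ((catalan k : ℝ) * ε ^ (k + 1) / C ^ k) *
                ((catalan (m - k) : ℝ) * ε ^ (m - k + 1) / C ^ (m - k)) :=
            mul_le_mul hbk hbm (hb _) (by positivity)
          refine step.trans (le_of_eq ?_)
          have e1 : ε ^ (k + 1) * ε ^ (m - k + 1) = ε ^ (m + 2) := by
            rw [← pow_add]; congr 1; omega
          have e2 : C ^ k * C ^ (m - k) = C ^ m := by
            rw [← pow_add]; congr 1; omega
          push_cast
          rw [div_mul_div_comm]
          rw [show (catalan k : ℝ) * ε ^ (k + 1) * ((catalan (m - k) : ℝ) * ε ^ (m - k + 1))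
              = (catalan k : ℝ) * (catalan (m - k) : ℝ) * (ε ^ (k + 1) * ε ^ (m - k + 1)) by ring,
            e1, e2]
          field_simp
        calc b (m + 1) ≤ _ := h1
          _ ≤ C⁻¹ * ∑ k ∈ Finset.range (m + 1),
              ((catalan k * catalan (m - k) : ℕ) : ℝ) * (ε ^ (m + 2) / C ^ m) :=
            mul_le_mul_of_nonneg_left h2 (by positivity)
          _ = (catalan (m + 1) : ℝ) * ε ^ (m + 1 + 1) / C ^ (m + 1) := by
            have hc : ∑ x ∈ Finset.range (m + 1), catalan x * catalan (m - x)
                = catalan (m + 1) := by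
              rw [catalan_succ, Fin.sum_univ_eq_sum_range (fun i => catalan i * catalan (m - i)) (m + 1)]
            rw [← Finset.sum_mul, ← Nat.cast_sum, hc, pow_succ]
            field_simp
            ring
  have hr0 : 0 ≤ 4 * ε / C := by positivity
  have hr1 : 4 * ε / C < 1 := by rw [div_lt_one hC]; linarith
  apply Summable.of_nonneg_of_le hb (fun n => ?_)
    ((summable_geometric_of_lt_one hr0 hr1).mul_left ε)
  calc b n ≤ (catalan n : ℝ) * ε ^ (n + 1) / C ^ n := key n
    _ ≤ (4 ^ n : ℝ) * ε ^ (n + 1) / C ^ n := by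
        have hcat : (catalan n : ℝ) ≤ (4 : ℝ) ^ n := by
          exact_mod_cast catalan_le_four_pow n
        gcongr
    _ = ε * (4 * ε / C) ^ n := by
        rw [div_pow, mul_pow]
        field_simp
        ring
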